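/- For every integer n >= 2, M(1,n) = n-1; that is, the maximum number of occurrences of s_1 in a reduced word of the longest permutation in S_n is exactly n-1. -/

import Mathlib

/-- The simple transposition `s_i = (i, i+1)` (1-indexed values) in `S_n`,
realized on `Fin n` (0-indexed positions `i-1` and `i`); junk value `1` otherwise. -/
def sgen (n i : ℕ) : Equiv.Perm (Fin n) :=
  if h : 0 < i ∧ i < n then Equiv.swap ⟨i - 1, by omega⟩ ⟨i, h.2⟩ else 1

/-- `l` is a reduced word for `w ∈ S_n`: its product is `w` and it has minimal length. -/
def IsReducedWordFor (n : ℕ) (l : List ℕ) (w : Equiv.Perm (Fin n)) : Prop :=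
  (l.map (sgen n)).prod = w ∧
    ∀ l' : List ℕ, (l'.map (sgen n)).prod = w → l.length ≤ l'.length

/-- The longest permutation `w_0 = n (n-1) ⋯ 2 1` of `S_n`. -/
def longestPerm (n : ℕ) : Equiv.Perm (Fin n) := Fin.revPerm

/-- `M(k,n)`: the maximum multiplicity of `s_k` among reduced words of `w_0 ∈ S_n`. -/
noncomputable def Mmax (k n : ℕ) : ℕ :=
  sSup {N | ∃ l : List ℕ, IsReducedWordFor n l (longestPerm n) ∧ l.count k = N}

/-- Two finite sets are weakly separated. -/
def WeaklySeparated (I J : Finset ℕ) : Prop :=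
  (∀ a ∈ I \ J, ∀ b ∈ J \ I, a < b) ∨ (∀ b ∈ J \ I, ∀ a ∈ I \ J, b < a)

/-- A monotone weakly separated path: pairwise weakly separated, and each step removes
one element `y` and adds one element `x > y`. -/
def IsMWSPath (P : List (Finset ℕ)) : Prop :=
  (∀ A ∈ P, ∀ B ∈ P, WeaklySeparated A B) ∧
    List.Chain' (fun A B => ∃ x y, y ∈ A ∧ x ∉ A ∧ y < x ∧ B = insert x (A.erase y)) P

lemma swap_order {n : ℕ} (a b x y : Fin n) (hab : (a:ℕ) + 1 = b) (hxy : x < y)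
    (hne : ¬(x = a ∧ y = b)) : Equiv.swap a b x < Equiv.swap a b y := by
  rcases x with ⟨x, hx⟩; rcases y with ⟨y, hy⟩; rcases a with ⟨A, hA⟩; rcases b with ⟨B, hB⟩
  simp only [Equiv.swap_apply_def, Fin.lt_def, Fin.ext_iff] at *
  split_ifs <;> simp_all <;> omega

def invCount (n : ℕ) (u : Equiv.Perm (Fin n)) : ℕ :=
  (Finset.univ.filter (fun p : Fin n × Fin n => p.1 < p.2 ∧ u p.2 < u p.1)).card

lemma key_core {n : ℕ} (u : Equiv.Perm (Fin n)) (a b : Fin n) (hab : (a:ℕ) + 1 = b) :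
    ((Finset.univ.filter (fun p : Fin n × Fin n =>
        p.1 < p.2 ∧ (u * Equiv.swap a b) p.2 < (u * Equiv.swap a b) p.1)) \ {(a, b)}).card
      ≤ invCount n u := by
  apply Finset.card_le_card_of_injOn (fun p => (Equiv.swap a b p.1, Equiv.swap a b p.2))
  · intro p hp
    replace hp : _ ∧ _ := ⟨Finset.mem_filter.1 (Finset.mem_sdiff.1 (Finset.mem_coe.1 hp)).1,
      (Finset.mem_sdiff.1 (Finset.mem_coe.1 hp)).2⟩
    simp only [Finset.mem_coe, Finset.mem_sdiff, Finset.mem_filter, Finset.mem_singleton,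
      Equiv.Perm.mul_apply] at hp
    obtain ⟨⟨-, h1, h2⟩, hne⟩ := hp
    simp only [Finset.mem_coe, invCount, Finset.mem_filter, Finset.mem_univ, true_and]
    refine ⟨swap_order a b p.1 p.2 hab h1 ?_, h2⟩
    intro ⟨e1, e2⟩
    exact hne (Prod.ext e1 e2)
  · intro p _ q _ h
    simp only [Prod.mk.injEq] at h
    exact Prod.ext ((Equiv.swap a b).injective h.1) ((Equiv.swap a b).injective h.2)

lemma key1 {n : ℕ} (u : Equiv.Perm (Fin n)) (a b : Fin n) (hab : (a:ℕ) + 1 = b) :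
    invCount n (u * Equiv.swap a b) ≤ invCount n u + 1 := by
  have h := key_core u a b hab
  have h2 : invCount n (u * Equiv.swap a b) ≤
      ((Finset.univ.filter (fun p : Fin n × Fin n =>
        p.1 < p.2 ∧ (u * Equiv.swap a b) p.2 < (u * Equiv.swap a b) p.1)) \ {(a, b)}).card + 1 := by
    have := Finset.card_le_card_sdiff_add_card (s := (Finset.univ.filter (fun p : Fin n × Fin n =>
        p.1 < p.2 ∧ (u * Equiv.swap a b) p.2 < (u * Equiv.swap a b) p.1))) (t := {(a,b)})
    simpa [invCount] using this
  omega

lemma key2 {n : ℕ} (u : Equiv.Perm (Fin n)) (a b : Fin n) (hab : (a:ℕ) + 1 = b)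
    (h : u b < u a) : invCount n (u * Equiv.swap a b) ≤ invCount n u := by
  have hc := key_core u a b hab
  have : (Finset.univ.filter (fun p : Fin n × Fin n =>
      p.1 < p.2 ∧ (u * Equiv.swap a b) p.2 < (u * Equiv.swap a b) p.1)) \ {(a, b)} =
      (Finset.univ.filter (fun p : Fin n × Fin n =>
      p.1 < p.2 ∧ (u * Equiv.swap a b) p.2 < (u * Equiv.swap a b) p.1)) := by
    rw [Finset.sdiff_eq_self_iff_disjoint, Finset.disjoint_singleton_right,
      Finset.mem_filter]
    rintro ⟨-, -, hlt⟩
    simp only [Equiv.Perm.mul_apply, Equiv.swap_apply_left, Equiv.swap_apply_right] at hlt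
    exact absurd hlt (not_lt.2 (le_of_lt h))
  rw [this] at hc
  exact hc

lemma step_le {n : ℕ} (u : Equiv.Perm (Fin n)) (a : ℕ) :
    invCount n (u * sgen n a) ≤ invCount n u + 1 := by
  unfold sgen
  split
  · next h => exact key1 u _ _ (show a - 1 + 1 = a by omega)
  · rw [mul_one]; omega

lemma chain_le {n : ℕ} (l : List ℕ) : invCount n ((l.map (sgen n)).prod) ≤ l.length := by
  induction l using List.reverseRecOn with
  | nil =>
    simp only [List.map_nil, List.prod_nil, List.length_nil, invCount, Equiv.Perm.one_apply,
      Nat.le_zero, Finset.card_eq_zero]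
    rw [Finset.filter_eq_empty_iff]
    rintro p - ⟨h1, h2⟩
    exact absurd (h1.trans h2) (lt_irrefl _)
  | append_singleton l a ih =>
    rw [List.map_append, List.prod_append]
    simp only [List.map_cons, List.map_nil, List.prod_cons, List.prod_nil, mul_one,
      List.length_append, List.length_singleton]
    calc invCount n (_ * sgen n a) ≤ invCount n ((l.map (sgen n)).prod) + 1 := step_le _ _
    _ ≤ l.length + 1 := by omega

lemma sgen_fix_zero {n : ℕ} (hn : 0 < n) (a : ℕ) (ha : a ≠ 1) :
    sgen n a ⟨0, hn⟩ = ⟨0, hn⟩ := by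
  unfold sgen
  split
  · next h =>
      apply Equiv.swap_apply_of_ne_of_ne
      · exact Fin.ne_of_val_ne (show 0 ≠ a - 1 by omega)
      · exact Fin.ne_of_val_ne (show 0 ≠ a by omega)
  · rfl

lemma count_le {n : ℕ} (hn : 2 ≤ n) (l : List ℕ)
    (h : invCount n ((l.map (sgen n)).prod) = l.length) :
    l.count 1 ≤ (((l.map (sgen n)).prod) ⟨0, by omega⟩).val := by
  induction l using List.reverseRecOn with
  | nil => simp
  | append_singleton l a ih =>
    rw [List.map_append, List.prod_append] at h ⊢
    simp only [List.map_cons, List.map_nil, List.prod_cons, List.prod_nil, mul_one] at h ⊢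
    set u := (l.map (sgen n)).prod with hu
    have hlen : invCount n u = l.length := by
      have h1 := chain_le (n := n) l
      rw [← hu] at h1
      have h2 := step_le u a
      rw [List.length_append, List.length_singleton] at h
      omega
    have ih' := ih hlen
    rw [List.count_append]
    by_cases ha : a = 1
    · subst ha
      have hgen : sgen n 1 = Equiv.swap (⟨0, by omega⟩ : Fin n) ⟨1, by omega⟩ := by
        unfold sgen
        rw [dif_pos ⟨one_pos, by omega⟩]
      have hval : (u * sgen n 1) ⟨0, by omega⟩ = u ⟨1, by omega⟩ := by
        rw [hgen, Equiv.Perm.mul_apply, Equiv.swap_apply_left]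
      have hlt : u ⟨0, by omega⟩ < u ⟨1, by omega⟩ := by
        rcases lt_trichotomy (u ⟨0, by omega⟩) (u ⟨1, by omega⟩) with h' | h' | h'
        · exact h'
        · exact absurd (u.injective h') (by rw [Fin.ext_iff]; simp)
        · exfalso
          have := key2 u ⟨0, by omega⟩ ⟨1, by omega⟩ (by simp) h'
          rw [← hgen] at this
          rw [List.length_append, List.length_singleton] at h
          omega
      have hc1 : ([1] : List ℕ).count 1 = 1 := by simp
      rw [hval, hc1]
      have : (u ⟨0, by omega⟩).val < (u ⟨1, by omega⟩).val := hlt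
      omega
    · have hfix : (u * sgen n a) ⟨0, by omega⟩ = u ⟨0, by omega⟩ := by
        rw [Equiv.Perm.mul_apply, sgen_fix_zero (by omega) a ha]
      have hc1 : ([a] : List ℕ).count 1 = 0 := by simp [List.count_cons, Ne.symm ha, ha]
      rw [hfix, hc1]
      omega

def bw : ℕ → List ℕ
  | 0 => []
  | m + 1 => (m + 1) :: bw m

def fw : ℕ → List ℕ
  | 0 => []
  | k + 1 => fw k ++ bw (k + 1)

lemma bw_length (m : ℕ) : (bw m).length = m := by
  induction m with
  | zero => rfl
  | succ m ih => simp [bw, ih]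

lemma bw_count (m : ℕ) : (bw m).count 1 = if m = 0 then 0 else 1 := by
  induction m with
  | zero => rfl
  | succ m ih =>
    rw [bw, List.count_cons, ih]
    simp only [beq_iff_eq]
    rcases Nat.eq_zero_or_pos m with h | h
    · subst h; norm_num
    · rw [if_neg (by omega), if_neg (by omega), if_neg (by omega)]

lemma fw_count (k : ℕ) : (fw k).count 1 = k := by
  induction k with
  | zero => rfl
  | succ k ih =>
    rw [fw, List.count_append, ih, bw_count]
    rw [if_neg (Nat.succ_ne_zero k)]

lemma two_fw_length (k : ℕ) : 2 * (fw k).length = k * (k + 1) := by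
  induction k with
  | zero => rfl
  | succ k ih => rw [fw, List.length_append, bw_length]; ring_nf; ring_nf at ih; omega

lemma bw_prod (n m : ℕ) (hm : m < n) (x : Fin n) :
    ((bw m).map (sgen n)).prod x =
      if h : x.val = 0 then ⟨m, hm⟩ else if h2 : x.val ≤ m then ⟨x.val - 1, by omega⟩ else x := by
  induction m with
  | zero =>
    simp only [bw, List.map_nil, List.prod_nil, Equiv.Perm.one_apply]
    split
    · next h => exact Fin.ext (by simp [h])
    · split
      · next h h2 => omega
      · rfl
  | succ m ih =>
    have hgen : sgen n (m + 1) = Equiv.swap (⟨m, by omega⟩ : Fin n) ⟨m + 1, hm⟩ := by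
      unfold sgen
      rw [dif_pos ⟨Nat.succ_pos m, hm⟩]
      congr 1
    rw [bw, List.map_cons, List.prod_cons, Equiv.Perm.mul_apply, ih (by omega), hgen]
    split_ifs with h0 h1 h2 h2
    · -- x = 0
      rw [Equiv.swap_apply_left]
    · -- 0 < x ≤ m, x ≤ m+1
      refine Equiv.swap_apply_of_ne_of_ne ?_ ?_
      · exact Fin.ne_of_val_ne (by simp; omega)
      · exact Fin.ne_of_val_ne (by simp; omega)
    · omega
    · -- x = m+1
      have hx : x = (⟨m + 1, hm⟩ : Fin n) := Fin.ext (by simp; omega)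
      rw [hx, Equiv.swap_apply_right]
      exact Fin.ext (by simp)
    · refine Equiv.swap_apply_of_ne_of_ne ?_ ?_
      · exact Fin.ne_of_val_ne (by simp; omega)
      · exact Fin.ne_of_val_ne (by simp; omega)

lemma fw_prod (n k : ℕ) (hkn : k < n) : ∀ x : Fin n,
    ((fw k).map (sgen n)).prod x =
      if h : x.val ≤ k then ⟨k - x.val, by omega⟩ else x := by
  induction k with
  | zero =>
    intro x
    simp only [fw, List.map_nil, List.prod_nil, Equiv.Perm.one_apply]
    split
    · next h => exact Fin.ext (by simp; omega)
    · rfl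
  | succ k ih =>
    intro x
    rw [fw, List.map_append, List.prod_append, Equiv.Perm.mul_apply, bw_prod n (k + 1) hkn]
    have ih' := ih (by omega)
    split_ifs with h0 h1 h1
    · -- x = 0
      rw [ih' ⟨k + 1, hkn⟩, dif_neg (by simp)]
      exact Fin.ext (by simp; omega)
    · omega
    · -- 0 < x ≤ k+1
      rw [ih' ⟨x.val - 1, by omega⟩, dif_pos (by simp; omega)]
      exact Fin.ext (by simp; omega)
    · rw [ih' x, dif_neg (by omega)]

lemma card_lt_pairs (n : ℕ) :
    2 * (Finset.univ.filter (fun p : Fin n × Fin n => p.1 < p.2)).card + n = n * n := by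
  classical
  set S := Finset.univ.filter (fun p : Fin n × Fin n => p.1 < p.2) with hS
  set T := Finset.univ.filter (fun p : Fin n × Fin n => p.2 < p.1) with hT
  have hTS : T.card = S.card := by
    apply Finset.card_bij (fun p _ => Prod.swap p)
    · intro p hp
      simp only [hS, hT, Finset.mem_filter, Finset.mem_univ, true_and] at *
      exact hp
    · intro p _ q _ h
      exact Prod.swap_injective h
    · intro q hq
      refine ⟨Prod.swap q, ?_, by simp⟩
      simp only [hS, hT, Finset.mem_filter, Finset.mem_univ, true_and] at *
      exact hq
  have h1 : S.card + (Finset.univ.filter (fun p : Fin n × Fin n => ¬ p.1 < p.2)).card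
      = n * n := by
    rw [Finset.card_filter_add_card_filter_not]
    simp [Fintype.card_prod]
  have h2 : (Finset.univ.filter (fun p : Fin n × Fin n => ¬ p.1 < p.2)) =
      T ∪ (Finset.univ.filter (fun p : Fin n × Fin n => p.1 = p.2)) := by
    ext p
    simp only [hT, Finset.mem_filter, Finset.mem_union, Finset.mem_univ, true_and]
    constructor
    · intro h
      rcases lt_trichotomy p.1 p.2 with h' | h' | h'
      · exact absurd h' h
      · exact Or.inr h'
      · exact Or.inl h'
    · rintro (h | h) <;> simp [h, not_lt, le_of_lt, le_of_eq]
  have h3 : Disjoint T (Finset.univ.filter (fun p : Fin n × Fin n => p.1 = p.2)) := by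
    rw [Finset.disjoint_left]
    intro p hp hp2
    simp only [hT, Finset.mem_filter, Finset.mem_univ, true_and] at hp hp2
    rw [hp2] at hp
    exact lt_irrefl _ hp
  have h4 : (Finset.univ.filter (fun p : Fin n × Fin n => p.1 = p.2)).card = n := by
    rw [show (Finset.univ.filter (fun p : Fin n × Fin n => p.1 = p.2)) =
      Finset.univ.image (fun a : Fin n => (a, a)) from ?_]
    · rw [Finset.card_image_of_injective _ (fun a b h => (Prod.ext_iff.1 h).1), Finset.card_univ,
        Fintype.card_fin]
    · ext p
      simp only [Finset.mem_filter, Finset.mem_univ, true_and, Finset.mem_image]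
      constructor
      · intro h; exact ⟨p.1, Prod.ext rfl h⟩
      · rintro ⟨a, -, rfl⟩; rfl
  rw [h2, Finset.card_union_of_disjoint h3, h4, hTS] at h1
  omega

lemma invCount_w0 (n : ℕ) (hn : 1 ≤ n) :
    invCount n (longestPerm n) = (fw (n - 1)).length := by
  have h1 := card_lt_pairs n
  have h2 := two_fw_length (n - 1)
  have h3 : invCount n (longestPerm n) =
      (Finset.univ.filter (fun p : Fin n × Fin n => p.1 < p.2)).card := by
    unfold invCount longestPerm
    congr 1
    apply Finset.filter_congr
    intro p _
    simp only [Fin.revPerm_apply, Fin.rev_lt_rev, and_iff_left_iff_imp, imp_self, iff_true]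
  have h4 : (n - 1) * (n - 1 + 1) = n * n - n := by
    rw [show n - 1 + 1 = n by omega, Nat.sub_one_mul]
  omega

lemma fw_prod_w0 (n : ℕ) (hn : 1 ≤ n) :
    ((fw (n - 1)).map (sgen n)).prod = longestPerm n := by
  apply Equiv.ext
  intro x
  rw [fw_prod n (n - 1) (by omega) x, dif_pos (by omega)]
  unfold longestPerm
  rw [Fin.revPerm_apply]
  exact Fin.ext (by rw [Fin.val_rev]; simp; omega)


theorem stmt7 (n : ℕ) (hn : 2 ≤ n) : Mmax 1 n = n - 1 := by
  have hmin : ∀ l' : List ℕ, ((l'.map (sgen n)).prod = longestPerm n) →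
      (fw (n - 1)).length ≤ l'.length := by
    intro l' hl'
    have := chain_le (n := n) l'
    rw [hl', invCount_w0 n (by omega)] at this
    exact this
  have hred : IsReducedWordFor n (fw (n - 1)) (longestPerm n) :=
    ⟨fw_prod_w0 n (by omega), hmin⟩
  have hmem : (n - 1) ∈ {N | ∃ l : List ℕ, IsReducedWordFor n l (longestPerm n) ∧
      l.count 1 = N} := ⟨fw (n - 1), hred, fw_count (n - 1)⟩
  have hub : ∀ N ∈ {N | ∃ l : List ℕ, IsReducedWordFor n l (longestPerm n) ∧
      l.count 1 = N}, N ≤ n - 1 := by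
    rintro N ⟨l, ⟨hprod, hlmin⟩, hcount⟩
    have hlen : l.length = invCount n (longestPerm n) := by
      have h1 := chain_le (n := n) l
      rw [hprod] at h1
      have h2 := hlmin (fw (n - 1)) (fw_prod_w0 n (by omega))
      rw [invCount_w0 n (by omega)] at h1 ⊢
      omega
    have h3 : invCount n ((l.map (sgen n)).prod) = l.length := by rw [hprod, hlen]
    have h4 := count_le hn l h3
    rw [hprod] at h4
    have h5 : ((longestPerm n) (⟨0, by omega⟩ : Fin n)).val = n - 1 := by
      unfold longestPerm
      rw [Fin.revPerm_apply, Fin.val_rev]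
    omega
  unfold Mmax
  apply le_antisymm
  · exact csSup_le ⟨n - 1, hmem⟩ hub
  · exact le_csSup ⟨n - 1, hub⟩ hmem
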